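/- For every nonempty cylinder C of dimension 2^n in Ω, there exist l ∈ {b,c,d} and N ∈ ℤ such that C = T^N([.w_n l]). -/

import Mathlib

inductive A : Type
  | a | b | c | d
deriving DecidableEq

def nextA : A → A
  | A.a => A.c | A.c => A.b | A.b => A.d | A.d => A.c

def F : ℕ → A
  | 0 => A.a
  | e+1 =>
    match e % 3 with
    | 0 => A.c
    | 1 => A.b
    | _ => A.d

lemma nextA_ne_a (x : A) : nextA x ≠ A.a := by cases x <;> simp [nextA]

lemma next_F (e : ℕ) : nextA (F e) = F (e+1) := by
  cases e with
  | zero => rfl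
  | succ e =>
    have h3 : e % 3 = 0 ∨ e % 3 = 1 ∨ e % 3 = 2 := by omega
    rcases h3 with h | h | h <;>
      · have h' : (e+1) % 3 = (e % 3 + 1) % 3 := by omega
        simp [F, h, h', nextA]

lemma F_succ_ne (e : ℕ) : F e ≠ F (e+1) := by
  cases e with
  | zero =>
    have : (0:ℕ) % 3 = 0 := rfl
    simp [F]
  | succ e =>
    have h3 : e % 3 = 0 ∨ e % 3 = 1 ∨ e % 3 = 2 := by omega
    rcases h3 with h | h | h <;>
      · have h' : (e+1) % 3 = (e % 3 + 1) % 3 := by omega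
        simp [F, h, h']

lemma F_ne_a (e : ℕ) (he : 1 ≤ e) : F e ≠ A.a := by
  obtain ⟨e, rfl⟩ : ∃ k, e = k + 1 := ⟨e - 1, by omega⟩
  have h3 : e % 3 = 0 ∨ e % 3 = 1 ∨ e % 3 = 2 := by omega
  rcases h3 with h | h | h <;> simp [F, h]

lemma F_bcd (e : ℕ) (he : 1 ≤ e) : F e = A.b ∨ F e = A.c ∨ F e = A.d := by
  obtain ⟨e, rfl⟩ : ∃ k, e = k + 1 := ⟨e - 1, by omega⟩
  have h3 : e % 3 = 0 ∨ e % 3 = 1 ∨ e % 3 = 2 := by omega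
  rcases h3 with h | h | h <;> simp [F, h]

def pdZ (x : ℤ) : A :=
  if x % 2 ≠ 0 then A.a
  else if h : x = 0 then A.a
  else nextA (pdZ (x / 2))
termination_by x.natAbs
decreasing_by
  simp_wf
  omega

lemma pdZ_odd (x : ℤ) (h : Odd x) : pdZ x = A.a := by
  rw [pdZ]
  have : x % 2 = 1 := Int.odd_iff.mp h
  simp [this]

lemma pdZ_zero : pdZ 0 = A.a := by rw [pdZ]; simp

lemma pdZ_two_mul (x : ℤ) (hx : x ≠ 0) : pdZ (2 * x) = nextA (pdZ x) := by
  rw [pdZ]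
  have h1 : (2 * x) % 2 = 0 := by omega
  have h2 : 2 * x ≠ 0 := by omega
  simp [h1, h2, Int.mul_ediv_cancel_left _ (by norm_num : (2:ℤ) ≠ 0)]

lemma pdZ_pow_mul (e : ℕ) (s : ℤ) (hs : Odd s) : pdZ (2 ^ e * s) = F e := by
  induction e with
  | zero => simpa [F] using pdZ_odd s hs
  | succ e ih =>
    have hs0 : s ≠ 0 := by rintro rfl; simp [Int.odd_iff] at hs
    have h1 : (2:ℤ) ^ (e+1) * s = 2 * (2 ^ e * s) := by ring
    have h2 : (2:ℤ) ^ e * s ≠ 0 := by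
      apply mul_ne_zero (by positivity) hs0
    rw [h1, pdZ_two_mul _ h2, ih, next_F]

lemma decomp_aux : ∀ (N : ℕ) (x : ℤ), x.natAbs ≤ N → x ≠ 0 →
    ∃ e : ℕ, ∃ s : ℤ, Odd s ∧ x = 2 ^ e * s := by
  intro N
  induction N with
  | zero => intro x h hx; exfalso; omega
  | succ N ih =>
    intro x h hx
    by_cases ho : Odd x
    · exact ⟨0, x, ho, by ring⟩
    · have he : x % 2 = 0 := by
        rcases Int.even_or_odd x with h' | h'
        · exact Int.even_iff.mp h'
        · exact absurd h' ho
      have hy : x = 2 * (x / 2) := by omega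
      have hy0 : x / 2 ≠ 0 := by omega
      have hnz : x.natAbs = 2 * (x / 2).natAbs := by
        conv_lhs => rw [hy]
        rw [Int.natAbs_mul]
        norm_num
      have hyN : (x / 2).natAbs ≤ N := by omega
      obtain ⟨e, s, hs, hes⟩ := ih (x / 2) hyN hy0
      exact ⟨e + 1, s, hs, by rw [hy, hes]; ring⟩

lemma decomp (x : ℤ) (hx : x ≠ 0) : ∃ e : ℕ, ∃ s : ℤ, Odd s ∧ x = 2 ^ e * s :=
  decomp_aux x.natAbs x le_rfl hx

lemma decomp_lt (x : ℤ) (hx : x ≠ 0) (k : ℕ) (hk : |x| < 2 ^ k) :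
    ∃ e : ℕ, ∃ s : ℤ, Odd s ∧ x = 2 ^ e * s ∧ e < k := by
  obtain ⟨e, s, hs, hes⟩ := decomp x hx
  refine ⟨e, s, hs, hes, ?_⟩
  have hs0 : s ≠ 0 := by rintro rfl; simp [Int.odd_iff] at hs
  have h1 : (1:ℤ) ≤ |s| := by
    rcases lt_or_ge s 0 with h | h
    · rw [abs_of_neg h]; omega
    · rw [abs_of_nonneg h]; omega
  have h2 : (2:ℤ) ^ e ≤ |x| := by
    rw [hes, abs_mul, abs_pow]
    calc (2:ℤ)^e = |(2:ℤ)|^e * 1 := by norm_num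
    _ ≤ |(2:ℤ)|^e * |s| := by
        apply mul_le_mul_of_nonneg_left h1 (by positivity)
  have h3 : (2:ℤ) ^ e < 2 ^ k := lt_of_le_of_lt h2 hk
  exact_mod_cast (pow_lt_pow_iff_right₀ (by norm_num : (1:ℤ) < 2)).mp h3

lemma decomp_lt_ne (x : ℤ) (hx : x ≠ 0) (k : ℕ) (hk : |x| < 2 ^ (k+1))
    (h1 : x ≠ 2 ^ k) (h2 : x ≠ -(2 ^ k)) :
    ∃ e : ℕ, ∃ s : ℤ, Odd s ∧ x = 2 ^ e * s ∧ e < k := by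
  obtain ⟨e, s, hs, hes, hek⟩ := decomp_lt x hx (k+1) hk
  refine ⟨e, s, hs, hes, ?_⟩
  rcases Nat.lt_or_ge e k with h | h
  · exact h
  · exfalso
    have hek' : e = k := by omega
    subst hek'
    have habs : |x| = 2 ^ e * |s| := by rw [hes, abs_mul, abs_pow, abs_two]
    have hpow : (0:ℤ) < 2 ^ e := by positivity
    have hk2 : |x| < 2 ^ e * 2 := by rw [pow_succ] at hk; exact hk
    have hs2 : |s| < 2 := by nlinarith
    have hsm := Int.odd_iff.mp hs
    have hs2' := abs_lt.mp hs2
    have hs1 : s = 1 ∨ s = -1 := by omega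
    rcases hs1 with rfl | rfl
    · exact h1 (by rw [hes]; ring)
    · exact h2 (by rw [hes]; ring)

/-- key addition lemma: adding a multiple of `2^k` doesn't change `pdZ` of a
number of 2-adic valuation `e < k`. -/
lemma pdZ_add_high (k e : ℕ) (c s : ℤ) (hs : Odd s) (hek : e < k) :
    pdZ (2 ^ k * c + 2 ^ e * s) = F e := by
  have hsum : (2:ℤ) ^ k * c + 2 ^ e * s = 2 ^ e * (2 ^ (k - e) * c + s) := by
    have : (2:ℤ) ^ k = 2 ^ e * 2 ^ (k - e) := by
      rw [← pow_add]; congr 1; omega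
    rw [this]; ring
  rw [hsum, pdZ_pow_mul]
  apply Even.add_odd _ hs
  have : k - e = (k - e - 1) + 1 := by omega
  rw [this, pow_succ']
  exact ⟨2 ^ (k - e - 1) * c, by ring⟩

lemma pdZ_dvd_add (k : ℕ) (y x : ℤ) (hy : (2:ℤ) ^ k ∣ y) (hx : x ≠ 0)
    (hlt : |x| < 2 ^ k) : pdZ (y + x) = pdZ x := by
  obtain ⟨c, rfl⟩ := hy
  obtain ⟨e, s, hs, rfl, hek⟩ := decomp_lt x hx k hlt
  rw [pdZ_add_high k e c s hs hek, pdZ_pow_mul e s hs]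

lemma pdZ_ne_a (x : ℤ) (hx : x ≠ 0) (hpd : pdZ x = A.a) : Odd x := by
  obtain ⟨e, s, hs, rfl⟩ := decomp x hx
  rcases Nat.eq_zero_or_pos e with rfl | he
  · simpa using hs
  · rw [pdZ_pow_mul e s hs] at hpd
    exact absurd hpd (F_ne_a e he)

lemma pdZ_pow (k : ℕ) : pdZ (2 ^ k) = F k := by
  simpa using pdZ_pow_mul k 1 odd_one

lemma pdZ_neg_pow (k : ℕ) : pdZ (-(2 ^ k)) = F k := by
  have : -((2:ℤ) ^ k) = 2 ^ k * (-1) := by ring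
  rw [this, pdZ_pow_mul k (-1) (by decide)]

lemma ediv_bounds (a b : ℤ) (hb : 0 < b) :
    a ≤ b * ((a + b - 1) / b) ∧ b * ((a + b - 1) / b) ≤ a + b - 1 := by
  have h1 := Int.mul_ediv_add_emod (a + b - 1) b
  have h2 := Int.emod_nonneg (a + b - 1) (ne_of_gt hb)
  have h3 := Int.emod_lt_of_pos (a + b - 1) hb
  omega

lemma pow_le_pow_int {a b : ℕ} (h : a ≤ b) : (2:ℤ) ^ a ≤ 2 ^ b :=
  pow_le_pow_right₀ (by norm_num) h

lemma RIG (n : ℕ) (hn : 1 ≤ n) (r : ℤ) (hr1 : 1 ≤ r) (hr2 : r ≤ 2 ^ n) (q : ℤ)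
    (Hpos : ∀ m : ℤ, 1 - r ≤ m → m ≤ 2 ^ n - r → 0 < q + m)
    (H : ∀ m : ℤ, 1 - r ≤ m → m ≤ 2 ^ n - r → m ≠ 0 → pdZ (q + m) = pdZ m) :
    (2 ^ n : ℤ) ∣ q ∨
      (2 ≤ n ∧ ∃ Q : ℤ, 0 < Q ∧ (2 ^ n : ℤ) ∣ Q ∧ pdZ Q = F (n - 1) ∧
        ((2 ^ (n - 1) < r ∧ q = Q + 2 ^ (n - 1)) ∨
          (r ≤ 2 ^ (n - 1) ∧ q = Q - 2 ^ (n - 1)))) := by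
  have hpow2 : (2:ℤ) ≤ 2 ^ n := by simpa using pow_le_pow_int hn
  -- Step 0 : 2 ∣ q
  have h2 : (2:ℤ) ∣ q := by
    have hkey : ∃ m : ℤ, (1 - r ≤ m) ∧ (m ≤ 2 ^ n - r) ∧ m % 2 = 1 := by
      by_cases h : r ≤ 2 ^ n - 1
      · exact ⟨1, by omega, by omega, by norm_num⟩
      · exact ⟨-1, by omega, by omega, by norm_num⟩
    obtain ⟨m, hm1, hm2, hmo⟩ := hkey
    have hm0 : m ≠ 0 := by omega
    have hH := H m hm1 hm2 hm0
    rw [pdZ_odd m (Int.odd_iff.mpr hmo)] at hH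
    have hqm0 : q + m ≠ 0 := ne_of_gt (Hpos m hm1 hm2)
    have := Int.odd_iff.mp (pdZ_ne_a _ hqm0 hH)
    omega
  -- inductive step
  have key : ∀ e : ℕ, 1 ≤ e → e ≤ n - 1 → (2:ℤ) ^ e ∣ q := by
    intro e
    induction e with
    | zero => intro h; exact absurd h (by norm_num)
    | succ e ih =>
      intro _ hen
      rcases Nat.eq_zero_or_pos e with rfl | he1
      · simpa using h2
      · obtain ⟨qh, hqh⟩ := ih he1 (by omega)
        rcases Int.even_or_odd qh with hev | hod
        · obtain ⟨y, hy⟩ := hev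
          refine ⟨y, ?_⟩
          rw [hqh, hy, pow_succ]
          ring
        · exfalso
          have hb0 : (0:ℤ) < 2 ^ e := by positivity
          have hd := ediv_bounds (1 - r) (2 ^ e) hb0
          set s₀ : ℤ := ((1 - r) + 2 ^ e - 1) / 2 ^ e with hs₀
          have hδeq := Int.mul_ediv_add_emod (2 - qh - s₀) 4
          have hδ0 : 0 ≤ (2 - qh - s₀) % 4 := Int.emod_nonneg _ (by norm_num)
          have hδ3 : (2 - qh - s₀) % 4 < 4 := Int.emod_lt_of_pos _ (by norm_num)
          set k : ℤ := (2 - qh - s₀) / 4 with hk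
          set s : ℤ := s₀ + (2 - qh - s₀) % 4 with hs
          have hs_eq : s = 2 - qh - 4 * k := by omega
          have hqhodd : qh % 2 = 1 := Int.odd_iff.mp hod
          have hsodd : Odd s := Int.odd_iff.mpr (by omega)
          have hsum : (2:ℤ) ^ e * s = 2 ^ e * s₀ + 2 ^ e * ((2 - qh - s₀) % 4) := by
            rw [hs]; ring
          have hup : (2:ℤ) ^ e * ((2 - qh - s₀) % 4) ≤ 2 ^ e * 3 :=
            mul_le_mul_of_nonneg_left (by omega) (le_of_lt hb0)
          have hlo : (0:ℤ) ≤ 2 ^ e * ((2 - qh - s₀) % 4) :=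
            mul_nonneg (le_of_lt hb0) hδ0
          have hpe2 : (2:ℤ) ^ (e + 2) ≤ 2 ^ n := pow_le_pow_int (by omega)
          have hpe2' : (2:ℤ) ^ (e + 2) = 2 ^ e * 4 := by rw [pow_add]; ring
          have hm1 : 1 - r ≤ 2 ^ e * s := by omega
          have hm2 : 2 ^ e * s ≤ 2 ^ n - r := by omega
          have hs0 : s ≠ 0 := by
            have := Int.odd_iff.mp hsodd; omega
          have hm0 : (2:ℤ) ^ e * s ≠ 0 := mul_ne_zero (ne_of_gt hb0) hs0
          have hH := H _ hm1 hm2 hm0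
          have hqm : q + 2 ^ e * s = 2 ^ (e + 1) * (1 - 2 * k) := by
            have hp : (2:ℤ) ^ (e + 1) = 2 ^ e * 2 := pow_succ 2 e
            linear_combination (2:ℤ) ^ e * hs_eq + hqh + (1 - 2 * k) * hp
          rw [hqm, pdZ_pow_mul (e + 1) _ ⟨-k, by ring⟩,
            pdZ_pow_mul e s hsodd] at hH
          exact F_succ_ne e hH.symm
  rcases Nat.lt_or_ge n 2 with hn2 | hn2
  · left
    have hn1 : n = 1 := by omega
    subst hn1
    simpa using h2
  · have hpowhalf : (2:ℤ) * 2 ^ (n - 1) = 2 ^ n := by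
      rw [← pow_succ']; congr 1; omega
    have hbh : (0:ℤ) < 2 ^ (n - 1) := by positivity
    obtain ⟨q', hq'⟩ := key (n - 1) (by omega) le_rfl
    rcases Int.even_or_odd q' with hev | hod
    · left
      obtain ⟨y, hy⟩ := hev
      refine ⟨y, ?_⟩
      rw [hq', hy]
      calc (2:ℤ) ^ (n-1) * (y + y) = (2 * 2 ^ (n-1)) * y := by ring
      _ = 2 ^ n * y := by rw [hpowhalf]
    · right
      refine ⟨hn2, ?_⟩
      have hq'odd : q' % 2 = 1 := Int.odd_iff.mp hod
      by_cases hr : r ≤ 2 ^ (n - 1)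
      · set m : ℤ := 2 ^ (n - 1) with hm
        have hm1 : 1 - r ≤ m := by omega
        have hm2 : m ≤ 2 ^ n - r := by omega
        have hm0 : m ≠ 0 := ne_of_gt hbh
        have hH := H m hm1 hm2 hm0
        rw [hm, pdZ_pow (n - 1)] at hH
        refine ⟨q + m, Hpos m hm1 hm2, ⟨(q' + 1) / 2, ?_⟩, hH, Or.inr ⟨hr, by ring⟩⟩
        have h2y : q' + 1 = 2 * ((q' + 1) / 2) := by omega
        calc q + m = 2 ^ (n-1) * (q' + 1) := by rw [hq', hm]; ring
        _ = (2 * 2 ^ (n-1)) * ((q' + 1) / 2) := by linear_combination (2:ℤ)^(n-1) * h2y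
        _ = 2 ^ n * ((q' + 1) / 2) := by rw [hpowhalf]
      · push_neg at hr
        set m : ℤ := -(2 ^ (n - 1)) with hm
        have hm1 : 1 - r ≤ m := by omega
        have hm2 : m ≤ 2 ^ n - r := by omega
        have hm0 : m ≠ 0 := by omega
        have hH := H m hm1 hm2 hm0
        rw [hm, pdZ_neg_pow (n - 1)] at hH
        refine ⟨q + m, Hpos m hm1 hm2, ⟨(q' - 1) / 2, ?_⟩, hH, Or.inl ⟨hr, by ring⟩⟩
        have h2y : q' - 1 = 2 * ((q' - 1) / 2) := by omega
        calc q + m = 2 ^ (n-1) * (q' - 1) := by rw [hq', hm]; ring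
        _ = (2 * 2 ^ (n-1)) * ((q' - 1) / 2) := by linear_combination (2:ℤ)^(n-1) * h2y
        _ = 2 ^ n * ((q' - 1) / 2) := by rw [hpowhalf]

def subst : A → List A
  | A.a => [A.a, A.c, A.a]
  | A.b => [A.d]
  | A.c => [A.b]
  | A.d => [A.c]

def substW (u : List A) : List A := u.flatMap subst

def wrd (n : ℕ) : List A := substW^[n - 1] [A.a]

def ltr (n : ℕ) : List A := substW^[n - 1] [A.c]

def seg (ξ : ℕ → A) (s m : ℕ) : List A := (List.range m).map fun i => ξ (s + 1 + i)

def IsFixed (ξ : ℕ → A) : Prop :=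
  ∀ N : ℕ, seg ξ 0 ((substW (seg ξ 0 N)).length) = substW (seg ξ 0 N)

/-- The phase space of the subshift: bi-infinite sequences all of whose finite
factors occur in the fixed point `ξ`. -/
def Omega (ξ : ℕ → A) : Set (ℤ → A) :=
  {ω | ∀ (s : ℤ) (m : ℕ), ∃ t : ℕ,
    seg ξ t m = (List.range m).map fun i => ω (s + 1 + (i : ℤ))}

/-- The `N`-th power of the shift map `T`. -/
def shiftN (N : ℤ) (ω : ℤ → A) : ℤ → A := fun i => ω (i + N)

/-- The cylinder `[u.v]` inside `Omega ξ`. -/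
def cyl (ξ : ℕ → A) (u v : List A) : Set (ℤ → A) :=
  {ω | ω ∈ Omega ξ ∧
    (List.range u.length).map (fun i => ω (1 + (i : ℤ) - u.length)) = u ∧
    (List.range v.length).map (fun i => ω (1 + (i : ℤ))) = v}

/-- The cylinder `[.v]` with empty past word. -/
def cylF (ξ : ℕ → A) (v : List A) : Set (ℤ → A) := cyl ξ [] v

-- ## Section 4 : structure of wrd and of the fixed point

def EL (m : ℕ) : List A := (List.range (2 * m)).map fun i : ℕ => pdZ ((i : ℤ) + 1)

lemma substW_append (x y : List A) : substW (x ++ y) = substW x ++ substW y :=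
  @List.flatMap_append _ _ x y subst

lemma subst_eq_next (z : A) (hz : z ≠ A.a) : subst z = [nextA z] := by
  cases z
  · exact absurd rfl hz
  all_goals rfl

lemma EL_succ (m : ℕ) : EL (m + 1) = EL m ++ [pdZ (2 * (m:ℤ) + 1), pdZ (2 * (m:ℤ) + 2)] := by
  unfold EL
  have h : 2 * (m + 1) = (2 * m) + 1 + 1 := by ring
  rw [h, List.range_succ, List.range_succ, List.map_append, List.map_append]
  rw [List.append_assoc]
  congr 1

lemma substW_EL (m : ℕ) : substW (EL m) = EL (2 * m) := by
  induction m with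
  | zero => rfl
  | succ m ih =>
    have hxa : pdZ (2 * (m:ℤ) + 1) = A.a := pdZ_odd _ ⟨m, by ring⟩
    have hm1 : ((m:ℤ) + 1) ≠ 0 := by omega
    have hyne : pdZ (2 * (m:ℤ) + 2) = nextA (pdZ ((m:ℤ) + 1)) := by
      have h : 2 * (m:ℤ) + 2 = 2 * ((m:ℤ) + 1) := by ring
      rw [h, pdZ_two_mul _ hm1]
    have h1 : 2 * (m + 1) = (2 * m + 1) + 1 := by ring
    rw [EL_succ, substW_append, ih, h1, EL_succ, EL_succ]
    have e1 : pdZ (2 * ((2*m : ℕ):ℤ) + 1) = A.a := pdZ_odd _ ⟨2*m, by push_cast; ring⟩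
    have e2 : pdZ (2 * ((2*m : ℕ):ℤ) + 2) = A.c := by
      have h : 2 * ((2*m : ℕ):ℤ) + 2 = 2 * (2 * (m:ℤ) + 1) := by push_cast; ring
      rw [h, pdZ_two_mul _ (by omega), hxa]
      rfl
    have e3 : pdZ (2 * ((2*m+1 : ℕ):ℤ) + 1) = A.a := pdZ_odd _ ⟨2*m+1, by push_cast; ring⟩
    have e4 : pdZ (2 * ((2*m+1 : ℕ):ℤ) + 2) = nextA (nextA (pdZ ((m:ℤ) + 1))) := by
      have h : 2 * ((2*m+1 : ℕ):ℤ) + 2 = 2 * (2 * ((m:ℤ) + 1)) := by push_cast; ring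
      rw [h, pdZ_two_mul _ (by omega), pdZ_two_mul _ hm1]
    rw [e1, e2, e3, e4]
    have hsub : substW [pdZ (2 * (m:ℤ) + 1), pdZ (2 * (m:ℤ) + 2)]
        = [A.a, A.c, A.a, nextA (nextA (pdZ ((m:ℤ) + 1)))] := by
      rw [hxa, hyne]
      have hne : nextA (pdZ ((m:ℤ) + 1)) ≠ A.a := nextA_ne_a _
      show substW [A.a, nextA (pdZ ((m:ℤ)+1))] = _
      cases hc : nextA (pdZ ((m:ℤ) + 1))
      · exact absurd hc hne
      all_goals simp [substW, subst, nextA]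
    rw [hsub]
    simp

lemma wrd_succ (n : ℕ) (hn : 1 ≤ n) : wrd (n + 1) = substW (wrd n) := by
  unfold wrd
  have h1 : n + 1 - 1 = (n - 1) + 1 := by omega
  rw [h1, Function.iterate_succ_apply']

lemma two_pow_half (n : ℕ) (hn : 1 ≤ n) : 2 * 2 ^ (n - 1) = 2 ^ n := by
  rw [← pow_succ']
  congr 1
  omega

lemma wrdE : ∀ n, 1 ≤ n → wrd n ++ [F n] = EL (2 ^ (n - 1)) := by
  intro n
  induction n with
  | zero => intro h; exact absurd h (by norm_num)
  | succ n ih =>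
    intro _
    rcases Nat.eq_zero_or_pos n with rfl | hn1
    · show wrd 1 ++ [F 1] = EL 1
      have h1 : wrd 1 = [A.a] := rfl
      have h2 : F 1 = A.c := rfl
      have h3 : EL 1 = EL 0 ++ [pdZ (2 * ((0:ℕ):ℤ) + 1), pdZ (2 * ((0:ℕ):ℤ) + 2)] :=
        EL_succ 0
      have p1 : pdZ (2 * ((0:ℕ):ℤ) + 1) = A.a := pdZ_odd _ ⟨0, by norm_num⟩
      have p2 : pdZ (2 * ((0:ℕ):ℤ) + 2) = A.c := by
        rw [show (2 * ((0:ℕ):ℤ) + 2) = 2 * 1 by norm_num, pdZ_two_mul 1 one_ne_zero,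
          pdZ_odd 1 odd_one]
        rfl
      rw [h1, h2, h3, p1, p2]
      rfl
    · have ih' := ih hn1
      have hpow : 2 ^ (n + 1 - 1) = 2 * 2 ^ (n - 1) := by
        rw [Nat.add_sub_cancel, two_pow_half n hn1]
      rw [hpow, ← substW_EL, ← ih', substW_append, wrd_succ n hn1]
      congr 1
      symm
      show subst (F n) ++ [] = [F (n+1)]
      rw [subst_eq_next (F n) (F_ne_a n hn1), next_F]
      rfl

lemma EL_length (m : ℕ) : (EL m).length = 2 * m := by simp [EL]

lemma wrd_length (n : ℕ) (hn : 1 ≤ n) : (wrd n).length = 2 ^ n - 1 := by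
  have h := congrArg List.length (wrdE n hn)
  rw [EL_length] at h
  simp at h
  have h2 := two_pow_half n hn
  omega

lemma EL_get (m i : ℕ) (h : i < (EL m).length) : (EL m)[i] = pdZ ((i:ℤ) + 1) := by
  simp [EL]

lemma wrd_get (n : ℕ) (hn : 1 ≤ n) (i : ℕ) (h : i < (wrd n).length) :
    (wrd n)[i] = pdZ ((i:ℤ) + 1) := by
  have h1 : (wrd n ++ [F n])[i]'(by simp [List.length_append]; omega) = (wrd n)[i] :=
    List.getElem_append_left h
  rw [← h1]
  have h2 := wrdE n hn
  rw [List.getElem_of_eq h2]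
  exact EL_get _ _ _

lemma xi_one (ξ : ℕ → A) (hξ : IsFixed ξ) : ξ 1 = A.a := by
  have h := hξ 1
  have hseg1 : seg ξ 0 1 = [ξ 1] := by simp [seg, List.range_succ]
  rw [hseg1] at h
  cases hc : ξ 1 with
  | a => rfl
  | b =>
    rw [hc] at h
    have h2 : substW [A.b] = [A.d] := rfl
    rw [h2] at h
    simp at h
    rw [hseg1, hc] at h
    simp at h
  | c =>
    rw [hc] at h
    have h2 : substW [A.c] = [A.b] := rfl
    rw [h2] at h
    simp at h
    rw [hseg1, hc] at h
    simp at h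
  | d =>
    rw [hc] at h
    have h2 : substW [A.d] = [A.c] := rfl
    rw [h2] at h
    simp at h
    rw [hseg1, hc] at h
    simp at h

lemma xi_prefix (ξ : ℕ → A) (hξ : IsFixed ξ) : ∀ n, 1 ≤ n → seg ξ 0 (2 ^ n - 1) = wrd n := by
  intro n
  induction n with
  | zero => intro h; exact absurd h (by norm_num)
  | succ n ih =>
    intro _
    rcases Nat.eq_zero_or_pos n with rfl | hn1
    · have h1 : wrd 1 = [A.a] := rfl
      have h2 : (2:ℕ) ^ 1 - 1 = 1 := rfl
      rw [h1, h2]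
      have h3 : seg ξ 0 1 = [ξ 1] := by simp [seg, List.range_succ]
      rw [h3, xi_one ξ hξ]
    · have hpre := ih hn1
      have h := hξ (2 ^ n - 1)
      rw [hpre] at h
      rw [← wrd_succ n hn1] at h
      rw [wrd_length (n + 1) (by omega)] at h
      exact h

lemma xi_eq (ξ : ℕ → A) (hξ : IsFixed ξ) (k : ℕ) (hk : 1 ≤ k) : ξ k = pdZ (k : ℤ) := by
  have hp := xi_prefix ξ hξ k hk
  have hk2 : k - 1 < 2 ^ k - 1 := by
    have := @Nat.lt_two_pow_self k
    omega
  have hlen : (seg ξ 0 (2 ^ k - 1)).length = 2 ^ k - 1 := by simp [seg]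
  have hlt : k - 1 < (seg ξ 0 (2 ^ k - 1)).length := by omega
  have h1 : (seg ξ 0 (2 ^ k - 1))[k-1] = ξ (0 + 1 + (k - 1)) := by simp [seg]
  have h2 : (seg ξ 0 (2 ^ k - 1))[k-1] = (wrd k)[k-1]'(by rw [← hp]; exact hlt) :=
    List.getElem_of_eq hp hlt
  rw [h2, wrd_get k hk (k-1) (by rw [wrd_length k hk]; omega)] at h1
  have h3 : 0 + 1 + (k - 1) = k := by omega
  rw [h3] at h1
  have h4 : (((k:ℕ) - 1 : ℕ) : ℤ) + 1 = (k : ℤ) := by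
    have : (1:ℕ) ≤ k := hk
    push_cast [Nat.cast_sub this]
    ring
  rw [h4] at h1
  exact h1.symm

-- ## Section 5 : windows and Omega plumbing

lemma coe_range (m : ℕ) :
    (do let a ← List.range m; pure ((a : ℕ) : ℤ)) = (List.range m).map (fun i : ℕ => (i : ℤ)) := by
  simp
  induction m with
  | zero => rfl
  | succ m ih => rw [List.range_succ, List.flatMap_append, List.map_append, ih]; rfl

def winEq (ω : ℤ → A) (p : ℤ) (w : List A) : Prop :=
  ∀ i : ℕ, (h : i < w.length) → ω (p + i) = w[i]

lemma list_eq_iff (f : ℕ → A) (w : List A) :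
    (List.range w.length).map f = w ↔ ∀ i : ℕ, (h : i < w.length) → f i = w[i] := by
  constructor
  · intro h i hi
    have h2 : ((List.range w.length).map f)[i]'(by simpa using hi) = w[i] :=
      List.getElem_of_eq h _
    simpa using h2
  · intro h
    apply List.ext_getElem
    · simp
    · intro i h1 h2
      simp only [List.getElem_map, List.getElem_range]
      exact h i h2

lemma mem_cyl_iff (ξ : ℕ → A) (u v : List A) (ω : ℤ → A) :
    ω ∈ cyl ξ u v ↔ ω ∈ Omega ξ ∧ winEq ω (1 - u.length) u ∧ winEq ω 1 v := by
  unfold cyl winEq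
  simp only [Set.mem_setOf_eq]
  rw [coe_range, List.map_map, coe_range, List.map_map, list_eq_iff, list_eq_iff]
  simp only [Function.comp_apply]
  have harg : ∀ i : ℕ, (1 + (i:ℤ) - u.length) = (1 - (u.length:ℤ)) + i := by
    intro i; ring
  constructor
  · rintro ⟨h1, h2, h3⟩
    exact ⟨h1, fun i hi => by rw [← harg]; exact h2 i hi,
      fun i hi => by have := h3 i hi; rw [← this]; try (congr 1 <;> ring)⟩
  · rintro ⟨h1, h2, h3⟩
    exact ⟨h1, fun i hi => by rw [harg]; exact h2 i hi,
      fun i hi => by have := h3 i hi; rw [← this]; try (congr 1 <;> ring)⟩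

lemma winEq_append (ω : ℤ → A) (p : ℤ) (x y : List A) :
    winEq ω p (x ++ y) ↔ winEq ω p x ∧ winEq ω (p + x.length) y := by
  constructor
  · intro h
    constructor
    · intro i hi
      have h2 := h i (by simp; omega)
      rwa [List.getElem_append_left hi] at h2
    · intro i hi
      have h2 := h (x.length + i) (by simp; omega)
      rw [List.getElem_append_right (by omega)] at h2
      simp only [Nat.add_sub_cancel_left] at h2
      rw [← h2]
      congr 1
      push_cast
      ring
  · rintro ⟨h1, h2⟩ i hi
    rcases Nat.lt_or_ge i x.length with h | h
    · rw [List.getElem_append_left h]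
      exact h1 i h
    · rw [List.getElem_append_right h]
      have h3 := h2 (i - x.length) (by simp at hi; omega)
      rw [← h3]
      congr 1
      push_cast [Nat.cast_sub h]
      ring

lemma Omega_shift (ξ : ℕ → A) (N : ℤ) (ω : ℤ → A) (hω : ω ∈ Omega ξ) :
    shiftN N ω ∈ Omega ξ := by
  intro s m
  obtain ⟨t, ht⟩ := hω (s + N) m
  refine ⟨t, ?_⟩
  rw [ht]
  apply List.map_congr_left
  intro i _
  show ω (s + N + 1 + i) = ω (s + 1 + i + N)
  congr 1
  ring

lemma mem_cylF_iff (ξ : ℕ → A) (W : List A) (ω : ℤ → A) :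
    ω ∈ cylF ξ W ↔ ω ∈ Omega ξ ∧ winEq ω 1 W := by
  rw [cylF, mem_cyl_iff]
  constructor
  · rintro ⟨h1, _, h3⟩; exact ⟨h1, h3⟩
  · rintro ⟨h1, h3⟩
    exact ⟨h1, fun i hi => by simp at hi, h3⟩

lemma image_cylF (ξ : ℕ → A) (N : ℤ) (W : List A) :
    shiftN N '' cylF ξ W = {ω | ω ∈ Omega ξ ∧ winEq ω (1 - N) W} := by
  ext ω
  constructor
  · rintro ⟨ω₀, hω₀, rfl⟩
    rw [mem_cylF_iff] at hω₀
    refine ⟨Omega_shift ξ N ω₀ hω₀.1, ?_⟩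
    intro i hi
    show ω₀ (1 - N + i + N) = W[i]
    have := hω₀.2 i hi
    rw [← this]
    congr 1
    ring
  · rintro ⟨h1, h2⟩
    refine ⟨shiftN (-N) ω, ?_, ?_⟩
    · rw [mem_cylF_iff]
      refine ⟨Omega_shift ξ (-N) ω h1, ?_⟩
      intro i hi
      show ω (1 + i + -N) = W[i]
      have := h2 i hi
      rw [← this]
      congr 1
      ring
    · funext i
      show ω (i + N + -N) = ω i
      congr 1
      ring

lemma occ (ξ : ℕ → A) (hξ : IsFixed ξ) (ω : ℤ → A) (hω : ω ∈ Omega ξ) (s : ℤ) (m : ℕ) :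
    ∃ t : ℕ, ∀ i : ℕ, i < m → ω (s + 1 + i) = pdZ ((t : ℤ) + 1 + i) := by
  obtain ⟨t, ht⟩ := hω s m
  rw [coe_range, List.map_map] at ht
  refine ⟨t, fun i hi => ?_⟩
  have h1 : (seg ξ t m)[i]'(by simp [seg]; omega) = ξ (t + 1 + i) := by simp [seg]
  have h2 : (seg ξ t m)[i]'(by simp [seg]; omega)
      = ((List.range m).map ((fun i : ℤ => ω (s + 1 + i)) ∘ (fun i : ℕ => (i:ℤ))))[i]'(by simp; omega) :=
    List.getElem_of_eq ht _
  simp only [List.getElem_map, List.getElem_range, Function.comp_apply] at h2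
  rw [h1] at h2
  rw [← h2, xi_eq ξ hξ (t + 1 + i) (by omega)]
  push_cast
  ring_nf

lemma pdZ_bcd (x : ℤ) (hx : x ≠ 0) (h2 : (2:ℤ) ∣ x) :
    pdZ x = A.b ∨ pdZ x = A.c ∨ pdZ x = A.d := by
  obtain ⟨e, s, hs, rfl⟩ := decomp x hx
  rw [pdZ_pow_mul e s hs]
  apply F_bcd
  rcases Nat.eq_zero_or_pos e with rfl | he
  · exfalso
    simp only [pow_zero, one_mul] at h2
    obtain ⟨c, hc⟩ := h2
    have := Int.odd_iff.mp hs
    omega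
  · exact he

/-- integer-window occurrence lemma -/
lemma occZ (ξ : ℕ → A) (hξ : IsFixed ξ) (ω : ℤ → A) (hω : ω ∈ Omega ξ) (a : ℤ) (M : ℕ) :
    ∃ T : ℤ, 0 ≤ T ∧ ∀ m : ℤ, 0 ≤ m → m < (M:ℤ) → ω (a + m) = pdZ (T + 1 + m) := by
  obtain ⟨t, ht⟩ := occ ξ hξ ω hω (a - 1) M
  refine ⟨(t:ℤ), by positivity, fun m hm0 hmM => ?_⟩
  have hi := ht m.toNat (by omega)
  have h1 : a - 1 + 1 + ((m.toNat : ℕ):ℤ) = a + m := by omega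
  have h2 : (t:ℤ) + 1 + ((m.toNat : ℕ):ℤ) = (t:ℤ) + 1 + m := by omega
  rw [h1, h2] at hi
  exact hi

theorem stmt14 (ξ : ℕ → A) (hξ : IsFixed ξ) :
    ∀ n : ℕ, 1 ≤ n → ∀ u v : List A, u.length + v.length = 2 ^ n →
      (cyl ξ u v).Nonempty →
      ∃ lt : A, (lt = A.b ∨ lt = A.c ∨ lt = A.d) ∧
        ∃ N : ℤ, cyl ξ u v = shiftN N '' cylF ξ (wrd n ++ [lt]) := by
  classical
  intro n hn u v hlen hne
  obtain ⟨ω₀, hω₀⟩ := hne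
  have hLpos : (0:ℤ) < 2 ^ n := by positivity
  have hhpos : (0:ℤ) < 2 ^ (n-1) := by positivity
  have hhalfZ : (2:ℤ) * 2 ^ (n-1) = 2 ^ n := by rw [← pow_succ']; congr 1; omega
  have hhalfN : 2 * 2 ^ (n-1) = 2 ^ n := two_pow_half n hn
  have hcastL : ((2 ^ n : ℕ) : ℤ) = 2 ^ n := by push_cast; ring
  have hcasth : ((2 ^ (n-1) : ℕ) : ℤ) = 2 ^ (n-1) := by push_cast; ring
  set w : List A := u ++ v with hwdef
  have hwlen : w.length = 2 ^ n := by rw [hwdef, List.length_append, hlen]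
  set wg : ℤ → A := fun j => w.getD (j - 1).toNat A.a with hwg
  have hwgj : ∀ j : ℤ, ∀ h : ((j - 1).toNat < w.length), wg j = w[(j-1).toNat] :=
    fun j h => List.getD_eq_getElem w A.a h
  have hwgi : ∀ i : ℕ, ∀ h : (i < w.length), wg ((i:ℤ) + 1) = w[i] := by
    intro i h
    have h2 : (((i:ℤ) + 1) - 1).toNat = i := by omega
    have h3 := hwgj ((i:ℤ)+1) (by rw [h2]; exact h)
    simp only [h2] at h3
    exact h3
  set P : ℕ → Prop := fun r => 1 ≤ r ∧
    ∀ j : ℤ, 1 ≤ j → j ≤ 2 ^ n → j ≠ (r:ℤ) → wg j = pdZ (j - (r:ℤ)) with hP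
  rw [mem_cyl_iff] at hω₀
  obtain ⟨hΩ₀, hu₀, hv₀⟩ := hω₀
  have hwin₀ : winEq ω₀ (1 - u.length) w := by
    rw [hwdef, winEq_append]
    refine ⟨hu₀, fun i hi => ?_⟩
    have := hv₀ i hi
    rw [← this]; congr 1; ring
  obtain ⟨T₀, hT₀, hocc₀⟩ := occZ ξ hξ ω₀ hΩ₀ (1 - u.length) (2 ^ n)
  have hwq₀ : ∀ j : ℤ, 1 ≤ j → j ≤ 2 ^ n → wg j = pdZ (T₀ + j) := by
    intro j h1 h2
    have h2' : j ≤ ((2^n : ℕ) : ℤ) := by rw [hcastL]; exact h2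
    have hi := hocc₀ (j - 1) (by omega) (by omega)
    have hlt : (j - 1).toNat < w.length := by rw [hwlen]; omega
    have hwire := hwin₀ (j-1).toNat hlt
    have harg : (1 - (u.length:ℤ)) + ((j-1).toNat : ℤ) = 1 - (u.length:ℤ) + (j - 1) := by
      omega
    rw [harg] at hwire
    rw [hwgj j hlt, ← hwire, hi]
    congr 1
    ring
  obtain ⟨j₀, hj01, hj0L, c₀, hc₀⟩ :
      ∃ j₀ : ℤ, 1 ≤ j₀ ∧ j₀ ≤ 2^n ∧ ∃ c₀ : ℤ, T₀ + j₀ = 2^n * c₀ := by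
    refine ⟨2^n - T₀ % 2^n, ?_, ?_, T₀ / 2^n + 1, ?_⟩
    · have := Int.emod_lt_of_pos T₀ hLpos; omega
    · have := Int.emod_nonneg T₀ (ne_of_gt hLpos); omega
    · have := Int.mul_ediv_add_emod T₀ (2^n); linarith
  have hPj₀ : P j₀.toNat := by
    constructor
    · omega
    · intro j h1 h2 hnej
      have hj₀ : (j₀.toNat : ℤ) = j₀ := by omega
      rw [hj₀] at hnej
      rw [hwq₀ j h1 h2]
      have harg : T₀ + j = (2^n * c₀) + (j - j₀) := by omega
      rw [harg, hj₀]
      exact pdZ_dvd_add n _ _ ⟨c₀, rfl⟩ (by omega) (by rw [abs_lt]; omega)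
  have hj0le : j₀.toNat ≤ 2 ^ n := by omega
  have hPR : P (Nat.findGreatest P (2^n)) := Nat.findGreatest_spec hj0le hPj₀
  set R : ℕ := Nat.findGreatest P (2^n) with hRdef
  have hRL : R ≤ 2 ^ n := Nat.findGreatest_le (2^n)
  have hR1 : 1 ≤ R := hPR.1
  have hRLZ : (R:ℤ) ≤ 2^n := by omega
  have hR1Z : (1:ℤ) ≤ (R:ℤ) := by omega
  set l : A := wg R with hldef
  have hq₀H : ∀ m : ℤ, 1 - (R:ℤ) ≤ m → m ≤ 2^n - (R:ℤ) → m ≠ 0 →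
      pdZ ((T₀ + R) + m) = pdZ m := by
    intro m h1 h2 h0
    have h3 := hwq₀ ((R:ℤ) + m) (by omega) (by omega)
    rw [hPR.2 ((R:ℤ) + m) (by omega) (by omega) (by omega)] at h3
    have harg : T₀ + ((R:ℤ) + m) = (T₀ + R) + m := by ring
    have harg2 : (R:ℤ) + m - R = m := by ring
    rw [harg2, harg] at h3
    exact h3.symm
  have hq₀pos : ∀ m : ℤ, 1 - (R:ℤ) ≤ m → m ≤ 2^n - (R:ℤ) → 0 < (T₀ + R) + m := by
    intro m h1 h2; omega
  have hlq₀ : l = pdZ (T₀ + R) := by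
    rw [hldef, hwq₀ R hR1Z hRLZ]
  have hRIG₀ := RIG n hn (R:ℤ) hR1Z hRLZ (T₀ + R) hq₀pos hq₀H
  have hl2 : (2:ℤ) ∣ (T₀ + R) := by
    rcases hRIG₀ with h | ⟨hn2, Q, hQpos, hQdvd, _, hbr⟩
    · obtain ⟨c, hc⟩ := h
      exact ⟨2^(n-1) * c, by rw [hc, ← hhalfZ]; ring⟩
    · obtain ⟨c, hc⟩ := hQdvd
      have hn2' : (2:ℤ) * 2^(n-2) = 2^(n-1) := by rw [← pow_succ']; congr 1; omega
      rcases hbr with ⟨_, hq⟩ | ⟨_, hq⟩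
      · exact ⟨2^(n-1)*c + 2^(n-2), by rw [hq, hc, ← hhalfZ, ← hn2']; ring⟩
      · exact ⟨2^(n-1)*c - 2^(n-2), by rw [hq, hc, ← hhalfZ, ← hn2']; ring⟩
  have hbcd : l = A.b ∨ l = A.c ∨ l = A.d := by
    rw [hlq₀]
    exact pdZ_bcd _ (by omega) hl2
  refine ⟨l, hbcd, (2:ℤ)^n - R + u.length, ?_⟩
  rw [image_cylF]
  have hWlen : (wrd n ++ [l]).length = 2 ^ n := by
    rw [List.length_append, wrd_length n hn, List.length_singleton]
    have h1 : 1 ≤ 2^n := Nat.one_le_two_pow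
    omega
  have hW1 : ∀ i : ℕ, i < 2^n - 1 → ∀ h : (i < (wrd n ++ [l]).length),
      (wrd n ++ [l])[i] = pdZ ((i:ℤ) + 1) := by
    intro i hi h
    have hiw : i < (wrd n).length := by rw [wrd_length n hn]; omega
    rw [List.getElem_append_left hiw]
    exact wrd_get n hn i hiw
  have hW2 : ∀ h : (2^n - 1 < (wrd n ++ [l]).length),
      (wrd n ++ [l])[2^n - 1] = l := by
    intro h
    have hiw : (wrd n).length ≤ 2^n - 1 := by rw [wrd_length n hn]
    rw [List.getElem_append_right hiw]
    simp [wrd_length n hn]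
  ext ω
  rw [mem_cyl_iff]
  simp only [Set.mem_setOf_eq]
  constructor
  · rintro ⟨hΩ, hwu, hwv⟩
    refine ⟨hΩ, ?_⟩
    have hwin : winEq ω (1 - u.length) w := by
      rw [hwdef, winEq_append]
      refine ⟨hwu, fun i hi => ?_⟩
      have := hwv i hi
      rw [← this]; congr 1; ring
    obtain ⟨T, hT, hocc⟩ := occZ ξ hξ ω hΩ (1 - (u.length:ℤ) + R - 2^n) (2*2^n - R)
    have hMcast : ((2*2^n - R : ℕ) : ℤ) = 2*2^n - (R:ℤ) := by
      push_cast [Nat.cast_sub (by omega : R ≤ 2*2^n)]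
      ring
    have hocc' : ∀ m : ℤ, 1 - 2^n ≤ m → m ≤ 2^n - R →
        ω ((1 - (u.length:ℤ) + R - 1) + m) = pdZ ((T + 2^n) + m) := by
      intro m h1 h2
      have h3 := hocc (m + 2^n - 1) (by omega) (by rw [hMcast]; omega)
      have harg : (1 - (u.length:ℤ) + R - 2^n) + (m + 2^n - 1)
          = (1 - (u.length:ℤ) + R - 1) + m := by ring
      have harg2 : T + 1 + (m + 2^n - 1) = (T + 2^n) + m := by ring
      rw [harg, harg2] at h3
      exact h3
    have hwq : ∀ j : ℤ, 1 ≤ j → j ≤ 2 ^ n → pdZ ((T + 2^n) + (j - R)) = wg j := by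
      intro j h1 h2
      rw [← hocc' (j - R) (by omega) (by omega)]
      have hlt : (j - 1).toNat < w.length := by rw [hwlen]; omega
      have hwire := hwin (j-1).toNat hlt
      have harg : (1 - (u.length:ℤ)) + ((j-1).toNat : ℤ)
          = (1 - (u.length:ℤ) + R - 1) + (j - R) := by omega
      rw [harg] at hwire
      rw [hwire, hwgj j hlt]
    have HH : ∀ m : ℤ, 1 - (R:ℤ) ≤ m → m ≤ 2^n - (R:ℤ) → m ≠ 0 →
        pdZ ((T + 2^n) + m) = pdZ m := by
      intro m h1 h2 h0
      have h3 := hwq ((R:ℤ) + m) (by omega) (by omega)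
      rw [hPR.2 ((R:ℤ) + m) (by omega) (by omega) (by omega)] at h3
      have harg2 : (R:ℤ) + m - R = m := by ring
      rw [harg2] at h3
      exact h3
    have Hpos : ∀ m : ℤ, 1 - (R:ℤ) ≤ m → m ≤ 2^n - (R:ℤ) → 0 < (T + 2^n) + m := by
      intro m h1 h2; omega
    have hlq : pdZ (T + 2^n) = l := by
      have h3 := hwq R hR1Z hRLZ
      have harg : (T + 2^n) + ((R:ℤ) - R) = T + 2^n := by ring
      rw [harg] at h3
      rw [h3, hldef]
    have hgoalpos : ∀ i : ℕ, (1 - ((2:ℤ)^n - R + u.length)) + (i:ℤ)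
        = (1 - (u.length:ℤ) + R - 1) + ((i:ℤ) + 1 - 2^n) := by intro i; ring
    rcases RIG n hn (R:ℤ) hR1Z hRLZ (T + 2^n) Hpos HH with hdvd |
      ⟨hn2, Q, hQpos, hQdvd, hQpd, hbr⟩
    · intro i hi
      rw [hWlen] at hi
      rw [hgoalpos i, hocc' ((i:ℤ) + 1 - 2^n) (by omega) (by omega)]
      rcases Nat.lt_or_ge i (2^n - 1) with hilt | hige
      · rw [hW1 i hilt (by rw [hWlen]; omega)]
        have harg : (T + 2^n) + ((i:ℤ) + 1 - 2^n) = (T + 2^n - 2^n) + ((i:ℤ)+1) := by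
          ring
        rw [harg]
        refine pdZ_dvd_add n _ _ ?_ (by omega) (by rw [abs_lt]; omega)
        obtain ⟨c, hc⟩ := hdvd
        exact ⟨c - 1, by rw [hc]; ring⟩
      · have hieq : i = 2^n - 1 := by omega
        subst hieq
        rw [hW2 (by rw [hWlen]; omega)]
        have harg : (T + 2^n) + (((2^n - 1 : ℕ):ℤ) + 1 - 2^n) = T + 2^n := by
          have : ((2^n - 1 : ℕ):ℤ) = 2^n - 1 := by omega
          rw [this]; ring
        rw [harg, hlq]
    · rcases hbr with ⟨hrb, hqQ⟩ | ⟨hrb, hqQ⟩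
      · intro i hi
        rw [hWlen] at hi
        rw [hgoalpos i, hocc' ((i:ℤ) + 1 - 2^n) (by omega) (by omega)]
        rcases Nat.lt_or_ge i (2^n - 1) with hilt | hige
        · rw [hW1 i hilt (by rw [hWlen]; omega)]
          by_cases hx : (i:ℤ) + 1 - 2^n + 2^(n-1) = 0
          · have harg : (T + 2^n) + ((i:ℤ) + 1 - 2^n) = Q := by omega
            rw [harg, hQpd]
            have harg2 : (i:ℤ) + 1 = 2^(n-1) := by omega
            rw [harg2, pdZ_pow]
          · have harg : (T + 2^n) + ((i:ℤ) + 1 - 2^n)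
                = Q + ((i:ℤ) + 1 - 2^n + 2^(n-1)) := by omega
            rw [harg, pdZ_dvd_add n Q _ hQdvd hx (by rw [abs_lt]; omega)]
            have harg2 : (i:ℤ) + 1 = 2^(n-1) + ((i:ℤ) + 1 - 2^n + 2^(n-1)) := by omega
            conv_rhs => rw [harg2]
            rw [pdZ_dvd_add (n-1) _ _ dvd_rfl hx (by rw [abs_lt]; omega)]
        · have hieq : i = 2^n - 1 := by omega
          subst hieq
          rw [hW2 (by rw [hWlen]; omega)]
          have harg : (T + 2^n) + (((2^n - 1 : ℕ):ℤ) + 1 - 2^n) = T + 2^n := by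
            have : ((2^n - 1 : ℕ):ℤ) = 2^n - 1 := by omega
            rw [this]; ring
          rw [harg, hlq]
      · exfalso
        have hP' : P (R + 2^(n-1)) := by
          constructor
          · omega
          · intro j h1 h2 hnej
            push_cast at hnej
            rw [← hwq j h1 h2]
            have hxne : j - (R:ℤ) - 2^(n-1) ≠ 0 := by omega
            have harg : (T + 2^n) + (j - R) = Q + (j - (R:ℤ) - 2^(n-1)) := by omega
            rw [harg, pdZ_dvd_add n Q _ hQdvd hxne (by rw [abs_lt]; omega)]
            congr 1
            push_cast
            ring
        have hltR : R < R + 2^(n-1) := by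
          have : 1 ≤ 2^(n-1) := Nat.one_le_two_pow
          omega
        have hleR : R + 2^(n-1) ≤ 2^n := by omega
        exact Nat.findGreatest_is_greatest hltR hleR hP'
  · rintro ⟨hΩ, hwinW⟩
    have hwin : winEq ω (1 - u.length) w := by
      obtain ⟨T, hT, hocc⟩ := occZ ξ hξ ω hΩ (1 - (u.length:ℤ) + R - 2^n) (2*2^n - R)
      have hMcast : ((2*2^n - R : ℕ) : ℤ) = 2*2^n - (R:ℤ) := by
        push_cast [Nat.cast_sub (by omega : R ≤ 2*2^n)]
        ring
      have hocc' : ∀ m : ℤ, 1 - 2^n ≤ m → m ≤ 2^n - R →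
          ω ((1 - (u.length:ℤ) + R - 1) + m) = pdZ ((T + 2^n) + m) := by
        intro m h1 h2
        have h3 := hocc (m + 2^n - 1) (by omega) (by rw [hMcast]; omega)
        have harg : (1 - (u.length:ℤ) + R - 2^n) + (m + 2^n - 1)
            = (1 - (u.length:ℤ) + R - 1) + m := by ring
        have harg2 : T + 1 + (m + 2^n - 1) = (T + 2^n) + m := by ring
        rw [harg, harg2] at h3
        exact h3
      have hWval : ∀ m : ℤ, 1 - 2^n ≤ m → m ≤ 0 →
          pdZ ((T + 2^n) + m) = (if m = 0 then l else pdZ (m + 2^n)) := by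
        intro m h1 h2
        have hi := hwinW (m + 2^n - 1).toNat (by rw [hWlen]; omega)
        rw [show (1 - ((2:ℤ)^n - R + u.length)) + ((m + 2^n - 1).toNat : ℤ)
            = (1 - (u.length:ℤ) + R - 1) + m by omega] at hi
        rw [hocc' m (by omega) (by omega)] at hi
        rw [hi]
        by_cases hm : m = 0
        · rw [if_pos hm]
          have h3 : (m + 2^n - 1).toNat = 2^n - 1 := by omega
          simp only [h3]
          exact hW2 (by rw [hWlen]; omega)
        · rw [if_neg hm]
          have h3 : (m + 2^n - 1).toNat < 2^n - 1 := by omega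
          rw [hW1 _ h3 (by rw [hWlen]; omega)]
          congr 1
          omega
      have hql : pdZ (T + 2^n) = l := by
        have h3 := hWval 0 (by omega) (by omega)
        simpa using h3
      have HH : ∀ m : ℤ, 1 - (2:ℤ)^n ≤ m → m ≤ 2^n - (2:ℤ)^n → m ≠ 0 →
          pdZ ((T + 2^n) + m) = pdZ m := by
        intro m h1 h2 h0
        rw [hWval m (by omega) (by omega), if_neg h0]
        have h4 : pdZ (-(2^n) + (m + 2^n)) = pdZ (m + 2^n) :=
          pdZ_dvd_add n _ _ ⟨-1, by ring⟩ (by omega) (by rw [abs_lt]; omega)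
        rw [show -((2:ℤ)^n) + (m + 2^n) = m by ring] at h4
        exact h4.symm
      have Hpos : ∀ m : ℤ, 1 - (2:ℤ)^n ≤ m → m ≤ 2^n - (2:ℤ)^n →
          0 < (T + 2^n) + m := by
        intro m h1 h2; omega
      rcases RIG n hn ((2:ℤ)^n) (by omega) le_rfl (T + 2^n) Hpos HH with hdvd |
        ⟨hn2, Q, hQpos, hQdvd, hQpd, hbr⟩
      · intro i hi
        have hiL : i < 2^n := by rw [hwlen] at hi; omega
        have harg : (1 - (u.length:ℤ)) + (i:ℤ)
            = (1 - (u.length:ℤ) + R - 1) + ((i:ℤ) + 1 - R) := by ring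
        rw [harg, hocc' ((i:ℤ) + 1 - R) (by omega) (by omega), ← hwgi i hi]
        by_cases hjR : (i:ℤ) + 1 = (R:ℤ)
        · have harg2 : (T + 2^n) + ((i:ℤ)+1-R) = T + 2^n := by omega
          rw [harg2, hql, hjR, hldef]
        · rw [hPR.2 ((i:ℤ)+1) (by omega) (by omega) hjR]
          exact pdZ_dvd_add n _ _ hdvd (by omega) (by rw [abs_lt]; omega)
      · rcases hbr with ⟨hrb, hqQ⟩ | ⟨hrb, hqQ⟩
        swap
        · exfalso
          omega
        have hlF : l = F (n-1) := by
          rw [← hql, hqQ]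
          rw [pdZ_dvd_add n Q _ hQdvd (by omega) (by rw [abs_lt]; omega), pdZ_pow]
        have hRbig : 2^(n-1) < (R:ℤ) := by
          by_contra hc
          push_neg at hc
          have hP' : P (R + 2^(n-1)) := by
            constructor
            · omega
            · intro j h1 h2 hnej
              push_cast at hnej
              have hc2 : ((R + 2^(n-1) : ℕ) : ℤ) = (R:ℤ) + 2^(n-1) := by
                push_cast; ring
              rw [hc2]
              by_cases hjR : j = (R:ℤ)
              · subst hjR
                rw [show wg (R:ℤ) = l from hldef.symm, hlF,
                  show (R:ℤ) - ((R:ℤ) + 2^(n-1)) = -(2^(n-1)) by ring, pdZ_neg_pow]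
              · rw [hPR.2 j h1 h2 hjR]
                have hpowc : (2:ℤ)^(n-1+1) = 2^n := by congr 1; omega
                obtain ⟨e, s, hs, hxe, hek⟩ := decomp_lt_ne (j - R) (by omega) (n-1)
                  (by rw [hpowc, abs_lt]; omega) (by omega) (by omega)
                have harg : j - ((R:ℤ) + 2^(n-1)) = 2^(n-1) * (-1) + 2^e * s := by
                  linear_combination hxe
                rw [harg, pdZ_add_high (n-1) e (-1) s hs hek, hxe,
                  pdZ_pow_mul e s hs]
          have hltR : R < R + 2^(n-1) := by
            have : 1 ≤ 2^(n-1) := Nat.one_le_two_pow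
            omega
          have hleR : R + 2^(n-1) ≤ 2^n := by omega
          exact Nat.findGreatest_is_greatest hltR hleR hP'
        intro i hi
        have hiL : i < 2^n := by rw [hwlen] at hi; omega
        have harg : (1 - (u.length:ℤ)) + (i:ℤ)
            = (1 - (u.length:ℤ) + R - 1) + ((i:ℤ) + 1 - R) := by ring
        rw [harg, hocc' ((i:ℤ) + 1 - R) (by omega) (by omega), ← hwgi i hi]
        by_cases hx0 : (i:ℤ) + 1 - R + 2^(n-1) = 0
        · have harg2 : (T + 2^n) + ((i:ℤ)+1-R) = Q := by omega
          rw [harg2, hQpd]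
          have hjR : (i:ℤ) + 1 ≠ (R:ℤ) := by omega
          rw [hPR.2 ((i:ℤ)+1) (by omega) (by omega) hjR]
          rw [show (i:ℤ) + 1 - R = -(2^(n-1)) by omega, pdZ_neg_pow]
        · have harg2 : (T + 2^n) + ((i:ℤ)+1-R) = Q + ((i:ℤ)+1-R+2^(n-1)) := by omega
          rw [harg2, pdZ_dvd_add n Q _ hQdvd hx0 (by rw [abs_lt]; omega)]
          by_cases hjR : (i:ℤ) + 1 = (R:ℤ)
          · rw [show (i:ℤ)+1-R+2^(n-1) = 2^(n-1) by omega, pdZ_pow, hjR,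
              show wg (R:ℤ) = l from hldef.symm, hlF]
          · rw [hPR.2 ((i:ℤ)+1) (by omega) (by omega) hjR]
            have hpowc : (2:ℤ)^(n-1+1) = 2^n := by congr 1; omega
            obtain ⟨e, s, hs, hxe, hek⟩ := decomp_lt_ne ((i:ℤ)+1-R) (by omega) (n-1)
              (by rw [hpowc, abs_lt]; omega) (by omega) (by omega)
            have harg3 : (i:ℤ)+1-R+2^(n-1) = 2^(n-1) * 1 + 2^e * s := by
              linear_combination hxe
            rw [harg3, pdZ_add_high (n-1) e 1 s hs hek, hxe, pdZ_pow_mul e s hs]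
    rw [hwdef, winEq_append] at hwin
    refine ⟨hΩ, hwin.1, fun i hi => ?_⟩
    have := hwin.2 i hi
    rw [← this]
    congr 1
    push_cast
    ring
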